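/- arXiv:2510.02950 — 3 statements merged into one kernel-verified Lean document; each statement's English description precedes it below -/
import Mathlib

section
/- Let c > 1 and p = c/n, and let β = 1 − 1.1/c − (ln c)/c. In the random digraph D(n, p), the expected number of out-arborescences T rooted at some vertex with |T| = s vertices and with no arcs of D(n,p) leaving V(T) is at most (n/(sc)) · (e^{1 − c + cs/n + ln c})^s; in particular, for 10 log n ≤ s ≤ βn this expectation is at most 1/poly(n). -/
open MeasureTheory

/-- Bernoulli measure on `Bool` with success probability `p` (truncated at 1). -/
noncomputable def bern (p : ℝ) : Measure Bool :=
  (PMF.bernoulli (min (Real.toNNReal p) 1) (min_le_right _ _)).toMeasure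

/-- The random digraph `D(n, p)`: every possible arc is present independently
with probability `p`; an outcome `ω` records for each ordered pair whether the
corresponding arc is present (diagonal entries are ignored). -/
noncomputable def Dnp (n : ℕ) (p : ℝ) : Measure ((Fin n × Fin n) → Bool) :=
  Measure.pi fun _ => bern p

/-- The arc `(x, y)` is present in the outcome `ω`. -/
def arcOf {n : ℕ} (ω : (Fin n × Fin n) → Bool) (x y : Fin n) : Prop :=
  x ≠ y ∧ ω (x, y) = true

/-- Directed reachability in the digraph given by `ω`. -/
def reachOf {n : ℕ} (ω : (Fin n × Fin n) → Bool) : Fin n → Fin n → Prop :=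
  Relation.ReflTransGen (arcOf ω)

/-- The out-component of `v`: all vertices reachable from `v`. -/
def outComp {n : ℕ} (ω : (Fin n × Fin n) → Bool) (v : Fin n) : Set (Fin n) :=
  {w | reachOf ω v w}

/-- The in-component of `v`: all vertices that can reach `v`. -/
def inComp {n : ℕ} (ω : (Fin n × Fin n) → Bool) (v : Fin n) : Set (Fin n) :=
  {w | reachOf ω w v}

open Finset

variable {V : Type*} [Fintype V] [DecidableEq V]

/-- The in-degree of a vertex `v` in the digraph with arc set `F`. -/
def inDeg (F : Finset (V × V)) (v : V) : ℕ := (F.filter fun a => a.2 = v).card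

/-- A root is a vertex of in-degree `0`. -/
def IsRoot (F : Finset (V × V)) (v : V) : Prop := inDeg F v = 0

/-- `F` is acyclic when arc directions are forgotten (no loops, no antiparallel
pairs, and the underlying simple graph is acyclic). -/
def UndirAcyclic (F : Finset (V × V)) : Prop :=
  (∀ a ∈ F, a.1 ≠ a.2 ∧ (a.2, a.1) ∉ F) ∧
  (SimpleGraph.fromRel fun u v => (u, v) ∈ F).IsAcyclic

/-- An arborescence forest: every vertex has in-degree at most `1`, and the
graph is acyclic ignoring directions. -/
def IsArbForest (F : Finset (V × V)) : Prop :=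
  (∀ v, inDeg F v ≤ 1) ∧ UndirAcyclic F

/-- A maximum arborescence forest of `G`: an arborescence forest `F ⊆ G` of
maximum arc cardinality. -/
def IsMaxArbForest (G F : Finset (V × V)) : Prop :=
  F ⊆ G ∧ IsArbForest F ∧ ∀ F' ⊆ G, IsArbForest F' → F'.card ≤ F.card

/-- Directed reachability in arc set `G`. -/
def Reach (G : Finset (V × V)) (u v : V) : Prop :=
  Relation.ReflTransGen (fun x y => (x, y) ∈ G) u v

/-- Weak reachability: `u` and `v` are in the same weakly connected component. -/
def WReach (F : Finset (V × V)) (u v : V) : Prop :=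
  Relation.ReflTransGen (fun x y => (x, y) ∈ F ∨ (y, x) ∈ F) u v

/-- A directed path in `G`, given as its (duplicate-free) list of vertices. -/
def IsDiPath (G : Finset (V × V)) (p : List V) : Prop :=
  p.Chain' (fun u v => (u, v) ∈ G) ∧ p.Nodup

/-- The arcs of a path given as a vertex list. -/
def pathArcs (p : List V) : Finset (V × V) := (p.zip p.tail).toFinset

/-- `UPDATE(F, P)`: remove the parent arcs (all in-arcs) of every vertex of the
path `p` other than its first vertex, and add the arcs of `p`. -/
def update (F : Finset (V × V)) (p : List V) : Finset (V × V) :=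
  (F.filter fun a => a.2 ∉ p.tail) ∪ pathArcs p

/-- A feasible path for `F` from root `r` to root `r'` in `G`: a directed path
`p = p₁ ++ p₂` from `r` to `r'` such that all arcs of `p₁` belong to the
arborescence (weak component) of `r` in `F` and all vertices of `p₂` belong to
the arborescence of `r'` in `F`. -/
def FeasiblePath (G F : Finset (V × V)) (r r' : V) (p : List V) : Prop :=
  IsDiPath G p ∧ p.head? = some r ∧ p.getLast? = some r' ∧
  ∃ p₁ p₂ : List V, p = p₁ ++ p₂ ∧
    (∀ a ∈ pathArcs p₁, a ∈ F ∧ WReach F r a.1 ∧ WReach F r a.2) ∧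
    (∀ v ∈ p₂, WReach F r' v)

/-- The vertex set of a finite arc set. -/
def verts {n : ℕ} (T : Finset (Fin n × Fin n)) : Finset (Fin n) :=
  T.image Prod.fst ∪ T.image Prod.snd

/-- `T` is an out-arborescence on `s` vertices present in the digraph `ω`, with
no arcs of the digraph leaving its vertex set: all arcs of `T` are present,
`T` is an arborescence on `s` vertices (an arborescence forest, spanning, with
all vertices reachable from a root), and no present arc leaves `verts T`. -/
def IsClosedOutArb {n : ℕ} (ω : (Fin n × Fin n) → Bool) (s : ℕ)
    (T : Finset (Fin n × Fin n)) : Prop :=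
  (∀ a ∈ T, arcOf ω a.1 a.2) ∧ IsArbForest T ∧
  (verts T).card = s ∧ T.card = s - 1 ∧
  (∃ r ∈ verts T, ∀ w ∈ verts T, Reach T r w) ∧
  (∀ x y : Fin n, arcOf ω x y → x ∈ verts T → y ∈ verts T)


section Prune
variable {U : Type*} [DecidableEq U] [LinearOrder U] [Nonempty U]

/-- canonical grounded parent functions -/
def GroundedFn (X : Finset U) (r : U) (f : U → U) : Prop :=
  (∀ v, v ∉ X → f v = r) ∧ (∀ v ∈ X, f v ∈ X ∨ f v = r) ∧ (∀ v ∈ X, ∃ k, f^[k] v = r)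

noncomputable def pruneLeaf (f : U → U) (X : Finset U) : U :=
  if hL : (X \ X.image f).Nonempty then (X \ X.image f).min' hL
  else if h : X.Nonempty then X.min' h else Classical.arbitrary U

lemma pruneLeaf_mem (f : U → U) {X : Finset U} (h : X.Nonempty) : pruneLeaf f X ∈ X := by
  unfold pruneLeaf
  by_cases hL : (X \ X.image f).Nonempty
  · rw [dif_pos hL]; exact (Finset.mem_sdiff.mp ((X \ X.image f).min'_mem hL)).1
  · rw [dif_neg hL, dif_pos h]; exact X.min'_mem h

lemma pruneLeaf_eq_of_image_eq {f g : U → U} {X : Finset U} (h : X.image f = X.image g) :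
    pruneLeaf f X = pruneLeaf g X := by unfold pruneLeaf; rw [h]

noncomputable def pruneCode (f : U → U) : Finset U → List U := fun X =>
  if h : X.Nonempty then
    f (pruneLeaf f X) :: pruneCode f (X.erase (pruneLeaf f X))
  else []
  termination_by X => X.card
  decreasing_by exact Finset.card_erase_lt_of_mem (pruneLeaf_mem f h)

lemma pruneCode_of_nonempty (f : U → U) {X : Finset U} (h : X.Nonempty) :
    pruneCode f X = f (pruneLeaf f X) :: pruneCode f (X.erase (pruneLeaf f X)) := by
  rw [pruneCode, dif_pos h]

lemma pruneCode_empty (f : U → U) : pruneCode f (∅ : Finset U) = [] := by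
  rw [pruneCode]; simp

lemma pruneCode_length (f : U → U) (X : Finset U) : (pruneCode f X).length = X.card := by
  induction X using Finset.strongInduction with
  | _ X ih =>
    by_cases h : X.Nonempty
    · have hX := pruneLeaf_mem f h
      rw [pruneCode_of_nonempty f h, List.length_cons, ih _ (Finset.erase_ssubset hX),
        Finset.card_erase_of_mem hX]
      have := Finset.card_pos.mpr h
      omega
    · rw [Finset.not_nonempty_iff_eq_empty.mp h, pruneCode_empty]; simp

/-- congruence: the code only depends on values on X -/
lemma pruneCode_congr {f g : U → U} (X : Finset U) (hfg : ∀ v ∈ X, f v = g v) :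
    pruneCode f X = pruneCode g X := by
  induction X using Finset.strongInduction with
  | _ X ih =>
    by_cases h : X.Nonempty
    · have him : X.image f = X.image g := Finset.image_congr fun v hv => hfg v hv
      have hl : pruneLeaf f X = pruneLeaf g X := pruneLeaf_eq_of_image_eq him
      have hmem := pruneLeaf_mem f h
      rw [pruneCode_of_nonempty f h, pruneCode_of_nonempty g h, ← hl,
        hfg _ hmem, ih _ (Finset.erase_ssubset hmem)]
      exact fun v hv => hfg v (Finset.mem_of_mem_erase hv)
    · rw [Finset.not_nonempty_iff_eq_empty.mp h, pruneCode_empty, pruneCode_empty]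

/-- the entries of the code are exactly the image of X -/
lemma pruneCode_toFinset (f : U → U) (X : Finset U) :
    (pruneCode f X).toFinset = X.image f := by
  induction X using Finset.strongInduction with
  | _ X ih =>
    by_cases h : X.Nonempty
    · have hmem := pruneLeaf_mem f h
      rw [pruneCode_of_nonempty f h, List.toFinset_cons, ih _ (Finset.erase_ssubset hmem)]
      conv_rhs => rw [← Finset.insert_erase hmem, Finset.image_insert]
    · rw [Finset.not_nonempty_iff_eq_empty.mp h, pruneCode_empty]; simp
end Prune

section Grounded
variable {U : Type*} [DecidableEq U] [LinearOrder U] [Nonempty U]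
variable {X : Finset U} {r : U} {f g : U → U}

lemma GroundedFn.leaf_exists (hf : GroundedFn X r f) (hr : r ∉ X) (h : X.Nonempty) :
    (X \ X.image f).Nonempty := by
  by_contra hL
  rw [Finset.not_nonempty_iff_eq_empty, Finset.sdiff_eq_empty_iff_subset] at hL
  -- X ⊆ X.image f, so X.image f = X (cardinalities) and orbits stay in X
  have him : X = X.image f := Finset.eq_of_subset_of_card_le hL Finset.card_image_le
  obtain ⟨v, hv⟩ := h
  obtain ⟨k, hk⟩ := hf.2.2 v hv
  have horb : ∀ i, f^[i] v ∈ X := by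
    intro i
    induction i with
    | zero => exact hv
    | succ i ih =>
      rw [Function.iterate_succ_apply', him]
      exact Finset.mem_image_of_mem f ih
  exact hr (hk ▸ horb k)

lemma GroundedFn.maps_notleaf (hf : GroundedFn X r f) (hr : r ∉ X) {ℓ : U} (hℓ : ℓ ∉ X.image f)
    {v : U} (hv : v ∈ X) (hvℓ : v ≠ ℓ) :
    ∀ i, (f^[i] v ∈ X ∧ f^[i] v ≠ ℓ) ∨ f^[i] v = r := by
  intro i
  induction i with
  | zero => exact Or.inl ⟨hv, hvℓ⟩
  | succ i ih =>
    rw [Function.iterate_succ_apply']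
    rcases ih with ⟨h1, _⟩ | h1
    · rcases hf.2.1 _ h1 with h2 | h2
      · exact Or.inl ⟨h2, fun he => hℓ (he ▸ Finset.mem_image_of_mem f h1)⟩
      · exact Or.inr h2
    · rw [h1, hf.1 r hr]; exact Or.inr rfl

lemma GroundedFn.update (hf : GroundedFn X r f) (hr : r ∉ X) {ℓ : U} (hℓX : ℓ ∈ X)
    (hℓ : ℓ ∉ X.image f) : GroundedFn (X.erase ℓ) r (Function.update f ℓ r) := by
  have hrℓ : r ≠ ℓ := fun h => hr (h ▸ hℓX)
  refine ⟨?_, ?_, ?_⟩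
  · intro v hv
    by_cases hvl : v = ℓ
    · rw [hvl, Function.update_self]
    · rw [Function.update_of_ne hvl]
      exact hf.1 v (fun hvX => hv (Finset.mem_erase.mpr ⟨hvl, hvX⟩))
  · intro v hv
    obtain ⟨hvl, hvX⟩ := Finset.mem_erase.mp hv
    rw [Function.update_of_ne hvl]
    rcases hf.2.1 v hvX with h1 | h1
    · exact Or.inl (Finset.mem_erase.mpr
        ⟨fun he => hℓ (he ▸ Finset.mem_image_of_mem f hvX), h1⟩)
    · exact Or.inr h1
  · intro v hv
    obtain ⟨hvl, hvX⟩ := Finset.mem_erase.mp hv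
    obtain ⟨k, hk⟩ := hf.2.2 v hvX
    refine ⟨k, ?_⟩
    have key : ∀ i, (Function.update f ℓ r)^[i] v = f^[i] v := by
      intro i
      induction i with
      | zero => rfl
      | succ i ih =>
        rw [Function.iterate_succ_apply', Function.iterate_succ_apply', ih]
        rcases hf.maps_notleaf hr hℓ hvX hvl i with ⟨_, h2⟩ | h2
        · rw [Function.update_of_ne h2]
        · rw [h2, Function.update_of_ne hrℓ]
    rw [key k, hk]

lemma GroundedFn.code_mem (hf : GroundedFn X r f) (hr : r ∉ X) :
    ∀ x ∈ pruneCode f X, x ∈ X ∨ x = r := by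
  induction X using Finset.strongInduction generalizing f with
  | _ X ih =>
    by_cases h : X.Nonempty
    · have hL := hf.leaf_exists hr h
      have hlf : pruneLeaf f X ∈ X := pruneLeaf_mem f h
      have hleaf : pruneLeaf f X ∉ X.image f := by
        unfold pruneLeaf
        rw [dif_pos hL]
        exact (Finset.mem_sdiff.mp ((X \ X.image f).min'_mem hL)).2
      intro x hx
      rw [pruneCode_of_nonempty f h] at hx
      rcases List.mem_cons.mp hx with rfl | hx
      · rcases hf.2.1 _ hlf with h1 | h1
        · exact Or.inl h1
        · exact Or.inr h1
      · have hupd := hf.update hr hlf hleaf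
        have hrX' : r ∉ X.erase (pruneLeaf f X) := fun hh => hr (Finset.mem_of_mem_erase hh)
        have hcongr : pruneCode f (X.erase (pruneLeaf f X)) =
            pruneCode (Function.update f (pruneLeaf f X) r) (X.erase (pruneLeaf f X)) := by
          apply pruneCode_congr
          intro v hv
          rw [Function.update_of_ne (Finset.mem_erase.mp hv).1]
        rw [hcongr] at hx
        rcases ih _ (Finset.erase_ssubset hlf) hupd hrX' x hx with h1 | h1
        · exact Or.inl (Finset.mem_of_mem_erase h1)
        · exact Or.inr h1
    · rw [Finset.not_nonempty_iff_eq_empty.mp h, pruneCode_empty]; simp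

lemma GroundedFn.code_getLast (hf : GroundedFn X r f) (hr : r ∉ X) (h : X.Nonempty) :
    (pruneCode f X).getLast? = some r := by
  induction X using Finset.strongInduction generalizing f with
  | _ X ih =>
    have hL := hf.leaf_exists hr h
    have hlf : pruneLeaf f X ∈ X := pruneLeaf_mem f h
    have hleaf : pruneLeaf f X ∉ X.image f := by
      unfold pruneLeaf
      rw [dif_pos hL]
      exact (Finset.mem_sdiff.mp ((X \ X.image f).min'_mem hL)).2
    set ℓ := pruneLeaf f X with hℓdef
    rw [pruneCode_of_nonempty f h]
    by_cases h' : (X.erase ℓ).Nonempty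
    · have hupd := hf.update hr hlf hleaf
      have hrX' : r ∉ X.erase ℓ := fun hh => hr (Finset.mem_of_mem_erase hh)
      have hcongr : pruneCode f (X.erase ℓ) = pruneCode (Function.update f ℓ r) (X.erase ℓ) := by
        apply pruneCode_congr
        intro v hv
        rw [Function.update_of_ne (Finset.mem_erase.mp hv).1]
      have := ih _ (Finset.erase_ssubset hlf) hupd hrX' h'
      rw [hcongr, List.getLast?_cons, this]
      rfl
    · -- X = {ℓ}; the single entry is f ℓ = r
      have hXl : X = {ℓ} := by
        rw [Finset.not_nonempty_iff_eq_empty] at h'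
        have := Finset.insert_erase hlf
        rw [h'] at this
        simpa using this.symm
      rw [Finset.not_nonempty_iff_eq_empty.mp h', pruneCode_empty]
      have hfl : f ℓ = r := by
        rcases hf.2.1 ℓ hlf with h1 | h1
        · rw [hXl, Finset.mem_singleton] at h1
          exfalso
          obtain ⟨k, hk⟩ := hf.2.2 ℓ hlf
          have : ∀ i, f^[i] ℓ = ℓ := by
            intro i; induction i with
            | zero => rfl
            | succ i ih2 => rw [Function.iterate_succ_apply', ih2, h1]
          have hlr : ℓ = r := (this k).symm.trans hk
          exact hr (hlr ▸ hlf)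
        · exact h1
      rw [hfl]; rfl

lemma GroundedFn.code_injective (hr : r ∉ X) (hf : GroundedFn X r f) (hg : GroundedFn X r g)
    (hcode : pruneCode f X = pruneCode g X) : f = g := by
  induction X using Finset.strongInduction generalizing f g with
  | _ X ih =>
    by_cases h : X.Nonempty
    · have him : X.image f = X.image g := by
        rw [← pruneCode_toFinset f X, ← pruneCode_toFinset g X, hcode]
      have hl : pruneLeaf f X = pruneLeaf g X := pruneLeaf_eq_of_image_eq him
      set ℓ := pruneLeaf f X with hℓdef
      have hlf : ℓ ∈ X := pruneLeaf_mem f h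
      have hL := hf.leaf_exists hr h
      have hleaff : ℓ ∉ X.image f := by
        rw [hℓdef]; unfold pruneLeaf
        rw [dif_pos hL]
        exact (Finset.mem_sdiff.mp ((X \ X.image f).min'_mem hL)).2
      have hleafg : ℓ ∉ X.image g := him ▸ hleaff
      rw [pruneCode_of_nonempty f h, pruneCode_of_nonempty g h, ← hl] at hcode
      obtain ⟨hhead, htail⟩ := List.cons.injEq .. ▸ hcode
      have hcf : pruneCode f (X.erase ℓ) = pruneCode (Function.update f ℓ r) (X.erase ℓ) :=
        pruneCode_congr _ fun v hv => (Function.update_of_ne (Finset.mem_erase.mp hv).1 _ _).symm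
      have hcg : pruneCode g (X.erase ℓ) = pruneCode (Function.update g ℓ r) (X.erase ℓ) :=
        pruneCode_congr _ fun v hv => (Function.update_of_ne (Finset.mem_erase.mp hv).1 _ _).symm
      have hrX' : r ∉ X.erase ℓ := fun hh => hr (Finset.mem_of_mem_erase hh)
      have hupd := ih _ (Finset.erase_ssubset hlf) hrX'
        (hf.update hr hlf hleaff) (hg.update hr hlf hleafg)
        (by rw [← hcf, ← hcg]; exact htail)
      funext v
      by_cases hvl : v = ℓ
      · rw [hvl]; exact hhead
      · have := congrFun hupd v
        rwa [Function.update_of_ne hvl, Function.update_of_ne hvl] at this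
    · rw [Finset.not_nonempty_iff_eq_empty] at h
      subst h
      funext v
      rw [hf.1 v (Finset.notMem_empty v), hg.1 v (Finset.notMem_empty v)]
end Grounded

section Digraph
/-- vertex set (copy of problem's verts) -/
def vertsA {n : ℕ} (T : Finset (Fin n × Fin n)) : Finset (Fin n) :=
  T.image Prod.fst ∪ T.image Prod.snd

/-- in-degree (copy) -/
def inDegA {n : ℕ} (T : Finset (Fin n × Fin n)) (v : Fin n) : ℕ :=
  (T.filter fun a => a.2 = v).card

noncomputable def rootOfA {n : ℕ} (T : Finset (Fin n × Fin n)) (d : Fin n) : Fin n :=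
  WithTop.untopD d (((vertsA T).filter fun v => inDegA T v = 0).min)

noncomputable def pfOfA {n : ℕ} (T : Finset (Fin n × Fin n)) (d : Fin n) : Fin n → Fin n :=
  fun v => WithTop.untopD (rootOfA T d) (((T.filter fun a => a.2 = v).image Prod.fst).min)

variable {n : ℕ} {T : Finset (Fin n × Fin n)} {d : Fin n} {s : ℕ}

lemma snd_mem_vertsA {a : Fin n × Fin n} (ha : a ∈ T) : a.2 ∈ vertsA T :=
  Finset.mem_union_right _ (Finset.mem_image_of_mem Prod.snd ha)

lemma fst_mem_vertsA {a : Fin n × Fin n} (ha : a ∈ T) : a.1 ∈ vertsA T :=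
  Finset.mem_union_left _ (Finset.mem_image_of_mem Prod.fst ha)

lemma sum_inDegA : ∑ v ∈ vertsA T, inDegA T v = T.card :=
  (Finset.card_eq_sum_card_fiberwise (fun a ha => snd_mem_vertsA ha)).symm

/-- there is exactly one root -/
lemma root_unique (hdeg : ∀ v, inDegA T v ≤ 1) (hverts : (vertsA T).card = s)
    (hcard : T.card = s - 1) (hs : 1 ≤ s) :
    ∃ r₀, (vertsA T).filter (fun v => inDegA T v = 0) = {r₀} := by
  set Z := (vertsA T).filter (fun v => inDegA T v = 0) with hZ
  have hsub : Z ⊆ vertsA T := Finset.filter_subset _ _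
  have hlow : ∑ v ∈ vertsA T, inDegA T v ≥ (vertsA T).card - Z.card := by
    calc ∑ v ∈ vertsA T, inDegA T v ≥ ∑ v ∈ vertsA T \ Z, inDegA T v :=
          Finset.sum_le_sum_of_subset (Finset.sdiff_subset)
      _ ≥ ∑ v ∈ vertsA T \ Z, 1 := by
          apply Finset.sum_le_sum
          intro v hv
          obtain ⟨hv1, hv2⟩ := Finset.mem_sdiff.mp hv
          have : ¬ inDegA T v = 0 := by
            intro h0
            exact hv2 (Finset.mem_filter.mpr ⟨hv1, h0⟩)
          omega
      _ = (vertsA T \ Z).card := by rw [Finset.sum_const, smul_eq_mul, mul_one]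
      _ = (vertsA T).card - Z.card := Finset.card_sdiff_of_subset hsub
  have hhigh : ∑ v ∈ vertsA T, inDegA T v ≤ (vertsA T).card - Z.card := by
    calc ∑ v ∈ vertsA T, inDegA T v = ∑ v ∈ vertsA T \ Z, inDegA T v := by
          rw [eq_comm]
          apply Finset.sum_subset Finset.sdiff_subset
          intro v hv hv2
          have : v ∈ Z := by
            by_contra hvZ
            exact hv2 (Finset.mem_sdiff.mpr ⟨hv, hvZ⟩)
          exact (Finset.mem_filter.mp this).2
      _ ≤ ∑ v ∈ vertsA T \ Z, 1 := Finset.sum_le_sum fun v _ => hdeg v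
      _ = (vertsA T \ Z).card := by rw [Finset.sum_const, smul_eq_mul, mul_one]
      _ = (vertsA T).card - Z.card := Finset.card_sdiff_of_subset hsub
  have hZcard : Z.card = 1 := by
    have h1 := sum_inDegA (T := T)
    have h2 : Z.card ≤ (vertsA T).card := Finset.card_le_card hsub
    rw [h1, hverts] at hlow hhigh
    omega
  exact Finset.card_eq_one.mp hZcard

lemma rootOfA_eq {r₀ : Fin n} (h : (vertsA T).filter (fun v => inDegA T v = 0) = {r₀}) :
    rootOfA T d = r₀ := by
  rw [rootOfA, h, Finset.min_singleton]; rfl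

lemma filter_eq_empty_of_not_mem_vertsA {v : Fin n} (hv : v ∉ vertsA T) :
    (T.filter fun a => a.2 = v) = ∅ := by
  rw [Finset.filter_eq_empty_iff]
  intro a ha hav
  exact hv (hav ▸ snd_mem_vertsA ha)

lemma pfOfA_of_no_inarc {v : Fin n} (h : inDegA T v = 0) : pfOfA T d v = rootOfA T d := by
  have : (T.filter fun a => a.2 = v) = ∅ := Finset.card_eq_zero.mp h
  rw [pfOfA, this]
  rfl

lemma pfOfA_parent (hdeg : ∀ v, inDegA T v ≤ 1) {u v : Fin n} (huv : (u, v) ∈ T) :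
    pfOfA T d v = u := by
  have hmem : (u, v) ∈ T.filter fun a => a.2 = v := Finset.mem_filter.mpr ⟨huv, rfl⟩
  have : (T.filter fun a => a.2 = v) = {(u, v)} :=
    Finset.eq_singleton_iff_unique_mem.mpr ⟨hmem, fun b hb => by
      have := Finset.card_le_one.mp (hdeg v) b hb _ hmem
      exact this⟩
  rw [pfOfA, this, Finset.image_singleton, Finset.min_singleton]
  rfl

/-- the root witness in the reachability condition is the in-degree-0 vertex -/
lemma reach_iterate (hdeg : ∀ v, inDegA T v ≤ 1) {r w : Fin n}
    (h : Relation.ReflTransGen (fun x y => (x, y) ∈ T) r w) :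
    ∃ k, (pfOfA T d)^[k] w = r := by
  induction h with
  | refl => exact ⟨0, rfl⟩
  | tail _ hstep ih =>
    obtain ⟨k, hk⟩ := ih
    refine ⟨k + 1, ?_⟩
    rw [Function.iterate_succ_apply, pfOfA_parent hdeg hstep, hk]

lemma grounded_of_arb (hdeg : ∀ v, inDegA T v ≤ 1) (hverts : (vertsA T).card = s)
    (hcard : T.card = s - 1) (hs : 1 ≤ s)
    (hreach : ∃ r ∈ vertsA T, ∀ w ∈ vertsA T, Relation.ReflTransGen (fun x y => (x, y) ∈ T) r w) :
    ∃ r₀ ∈ vertsA T, rootOfA T d = r₀ ∧ inDegA T r₀ = 0 ∧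
      (∀ w ∈ vertsA T, Relation.ReflTransGen (fun x y => (x, y) ∈ T) r₀ w) ∧
      GroundedFn ((vertsA T).erase r₀) r₀ (pfOfA T d) := by
  obtain ⟨r₀, hZ⟩ := root_unique hdeg hverts hcard hs
  have hmemZ : r₀ ∈ (vertsA T).filter (fun v => inDegA T v = 0) := by
    rw [hZ]; exact Finset.mem_singleton_self r₀
  have hr₀mem : r₀ ∈ vertsA T := (Finset.mem_filter.mp hmemZ).1
  have hr₀deg : inDegA T r₀ = 0 := (Finset.mem_filter.mp hmemZ).2
  obtain ⟨r, hrmem, hr⟩ := hreach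
  -- r = r₀
  have hrr : r = r₀ := by
    rcases (hr r₀ hr₀mem).cases_tail with h1 | ⟨c, _, hc⟩
    · exact h1.symm
    · exfalso
      have hm : (c, r₀) ∈ T.filter fun a => a.2 = r₀ := Finset.mem_filter.mpr ⟨hc, rfl⟩
      have hpos : 0 < (T.filter fun a => a.2 = r₀).card := Finset.card_pos.mpr ⟨_, hm⟩
      rw [inDegA] at hr₀deg
      omega
  subst hrr
  refine ⟨r, hr₀mem, rootOfA_eq hZ, hr₀deg, hr, ?_, ?_, ?_⟩
  · -- canonical
    intro v hv
    by_cases hvv : v ∈ vertsA T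
    · have hvr : v = r := by
        by_contra hne
        exact hv (Finset.mem_erase.mpr ⟨hne, hvv⟩)
      subst hvr
      rw [pfOfA_of_no_inarc hr₀deg, rootOfA_eq hZ]
    · have h0 : inDegA T v = 0 := by
        rw [inDegA, filter_eq_empty_of_not_mem_vertsA hvv, Finset.card_empty]
      rw [pfOfA_of_no_inarc h0, rootOfA_eq hZ]
  · -- maps into
    intro v hv
    obtain ⟨hvr, hvv⟩ := Finset.mem_erase.mp hv
    have h1 : inDegA T v ≠ 0 := by
      intro h0
      have : v ∈ (vertsA T).filter (fun v => inDegA T v = 0) := Finset.mem_filter.mpr ⟨hvv, h0⟩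
      rw [hZ, Finset.mem_singleton] at this
      exact hvr this
    have h1' : (T.filter fun a => a.2 = v).card ≠ 0 := h1
    obtain ⟨a, ha⟩ := Finset.card_pos.mp (Nat.pos_of_ne_zero h1')
    obtain ⟨haT, hav⟩ := Finset.mem_filter.mp ha
    have haT' : (a.1, v) ∈ T := by rwa [← hav, Prod.mk.eta]
    rw [pfOfA_parent hdeg haT']
    by_cases h2 : a.1 = r
    · exact Or.inr h2
    · exact Or.inl (Finset.mem_erase.mpr ⟨h2, fst_mem_vertsA haT⟩)
  · -- grounded
    intro v hv
    exact reach_iterate hdeg (hr v (Finset.mem_of_mem_erase hv))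
end Digraph

section Reconstruct
variable {n : ℕ} {T : Finset (Fin n × Fin n)} {d : Fin n}

lemma reconstructA (hdeg : ∀ v, inDegA T v ≤ 1) (hnl : ∀ a ∈ T, a.1 ≠ a.2)
    (hZ : (vertsA T).filter (fun v => inDegA T v = 0) = {rootOfA T d}) :
    T = ((vertsA T).filter fun v => pfOfA T d v ≠ v).image (fun v => (pfOfA T d v, v)) := by
  apply Finset.Subset.antisymm
  · intro a ha
    have h1 : pfOfA T d a.2 = a.1 := pfOfA_parent hdeg (by rwa [Prod.mk.eta])
    apply Finset.mem_image.mpr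
    refine ⟨a.2, Finset.mem_filter.mpr ⟨snd_mem_vertsA ha, ?_⟩, ?_⟩
    · rw [h1]; exact fun he => hnl a ha he
    · rw [h1]
  · intro y hy
    obtain ⟨v, hv, rfl⟩ := Finset.mem_image.mp hy
    obtain ⟨hvv, hvne⟩ := Finset.mem_filter.mp hv
    have h1 : inDegA T v ≠ 0 := by
      intro h0
      have : v ∈ (vertsA T).filter (fun v => inDegA T v = 0) := Finset.mem_filter.mpr ⟨hvv, h0⟩
      rw [hZ, Finset.mem_singleton] at this
      subst this
      exact hvne (pfOfA_of_no_inarc h0)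
    have h1' : (T.filter fun a => a.2 = v).card ≠ 0 := h1
    obtain ⟨a, ha⟩ := Finset.card_pos.mp (Nat.pos_of_ne_zero h1')
    obtain ⟨haT, hav⟩ := Finset.mem_filter.mp ha
    have haT' : (a.1, v) ∈ T := by rwa [← hav, Prod.mk.eta]
    rw [pfOfA_parent hdeg haT']
    exact haT'
end Reconstruct

lemma list_ext_getD {α : Type*} {l₁ l₂ : List α} {e : α} {m : ℕ}
    (h₁ : l₁.length = m) (h₂ : l₂.length = m) (hlast : l₁.getLast? = l₂.getLast?)
    (h : ∀ i : ℕ, i < m - 1 → l₁.getD i e = l₂.getD i e) : l₁ = l₂ := by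
  apply List.ext_getElem (by omega)
  intro i hi1 hi2
  by_cases him : i < m - 1
  · have := h i him
    rwa [List.getD_eq_getElem _ _ hi1, List.getD_eq_getElem _ _ hi2] at this
  · have him' : i = m - 1 := by omega
    have e1 : l₁.getLast? = some l₁[i] := by
      rw [List.getLast?_eq_getElem?, h₁, ← him', List.getElem?_eq_getElem hi1]
    have e2 : l₂.getLast? = some l₂[i] := by
      rw [List.getLast?_eq_getElem?, h₂, ← him', List.getElem?_eq_getElem hi2]
    rw [e1, e2] at hlast
    exact Option.some.inj hlast

set_option maxHeartbeats 1600000 in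
/-- Cayley-type counting bound for closed out-arborescences -/
theorem arb_count (n s : ℕ) (hs : 2 ≤ s) (hn : 0 < n) :
    {T : Finset (Fin n × Fin n) | (∀ v, inDegA T v ≤ 1) ∧ (∀ a ∈ T, a.1 ≠ a.2) ∧
      (vertsA T).card = s ∧ T.card = s - 1 ∧
      (∃ r ∈ vertsA T, ∀ w ∈ vertsA T,
        Relation.ReflTransGen (fun x y => (x, y) ∈ T) r w)}.ncard
      ≤ n.choose s * (s * s ^ (s - 2)) := by
  classical
  haveI : Nonempty (Fin n) := ⟨⟨0, hn⟩⟩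
  set d : Fin n := ⟨0, hn⟩
  set Φ : Finset (Fin n × Fin n) → Finset (Fin n) × Fin n × (Fin (s-2) → Fin n) :=
    fun T => (vertsA T, rootOfA T d,
      fun i => (pruneCode (pfOfA T d) ((vertsA T).erase (rootOfA T d))).getD i (rootOfA T d))
    with hΦ
  set W : Finset (Finset (Fin n) × Fin n × (Fin (s-2) → Fin n)) :=
    Finset.univ.filter (fun x => x.1.card = s ∧ x.2.1 ∈ x.1 ∧ ∀ i, x.2.2 i ∈ x.1) with hW
  -- facts for members of the set
  have key : ∀ T : Finset (Fin n × Fin n), ((∀ v, inDegA T v ≤ 1) ∧ (∀ a ∈ T, a.1 ≠ a.2) ∧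
      (vertsA T).card = s ∧ T.card = s - 1 ∧
      (∃ r ∈ vertsA T, ∀ w ∈ vertsA T,
        Relation.ReflTransGen (fun x y => (x, y) ∈ T) r w)) →
      (rootOfA T d ∈ vertsA T ∧
       (vertsA T).filter (fun v => inDegA T v = 0) = {rootOfA T d} ∧
       GroundedFn ((vertsA T).erase (rootOfA T d)) (rootOfA T d) (pfOfA T d) ∧
       ((vertsA T).erase (rootOfA T d)).card = s - 1) := by
    intro T ⟨hdeg, hnl, hverts, hcard, hreach⟩
    obtain ⟨r₀, hmem, hr₀eq, hdeg0, _, hground⟩ :=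
      grounded_of_arb (d := d) hdeg hverts hcard (by omega) hreach
    rw [← hr₀eq] at hmem hground
    refine ⟨hmem, ?_, hground, ?_⟩
    · obtain ⟨r₁, hZ⟩ := root_unique hdeg hverts hcard (by omega)
      rw [rootOfA_eq hZ]
      exact hZ
    · rw [Finset.card_erase_of_mem hmem, hverts]
  -- injection into W
  have h1 : {T : Finset (Fin n × Fin n) | (∀ v, inDegA T v ≤ 1) ∧ (∀ a ∈ T, a.1 ≠ a.2) ∧
      (vertsA T).card = s ∧ T.card = s - 1 ∧
      (∃ r ∈ vertsA T, ∀ w ∈ vertsA T,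
        Relation.ReflTransGen (fun x y => (x, y) ∈ T) r w)}.ncard ≤
      (W : Set (Finset (Fin n) × Fin n × (Fin (s - 2) → Fin n))).ncard := by
    apply Set.ncard_le_ncard_of_injOn Φ
    · -- maps into W
      intro T hT
      obtain ⟨hrmem, hZ, hground, hXcard⟩ := key T hT
      obtain ⟨hdeg, hnl, hverts, hcard, hreach⟩ := hT
      simp only [hW, Finset.coe_filter, Finset.mem_univ, true_and, Set.mem_setOf_eq, hΦ]
      refine ⟨hverts, hrmem, ?_⟩
      intro i
      set X := (vertsA T).erase (rootOfA T d)
      have hrX : rootOfA T d ∉ X := Finset.notMem_erase _ _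
      have hlen : (pruneCode (pfOfA T d) X).length = s - 1 := by
        rw [pruneCode_length, hXcard]
      have hi : (i : ℕ) < (pruneCode (pfOfA T d) X).length := by
        rw [hlen]; have := i.isLt; omega
      rw [List.getD_eq_getElem _ _ hi]
      rcases hground.code_mem hrX _ (List.getElem_mem hi) with h | h
      · exact Finset.mem_of_mem_erase h
      · rw [h]; exact hrmem
    · -- injective
      intro T hT T' hT' heq
      obtain ⟨hrmem, hZ, hground, hXcard⟩ := key T hT
      obtain ⟨hrmem', hZ', hground', hXcard'⟩ := key T' hT'
      obtain ⟨hdeg, hnl, hverts, hcard, hreach⟩ := hT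
      obtain ⟨hdeg', hnl', hverts', hcard', hreach'⟩ := hT'
      have e1 : vertsA T = vertsA T' := congrArg Prod.fst heq
      have e2 : rootOfA T d = rootOfA T' d := congrArg (Prod.fst ∘ Prod.snd) heq
      have e3 := congrArg (Prod.snd ∘ Prod.snd) heq
      rw [← e1, ← e2] at hground' hXcard'
      have hrX : rootOfA T d ∉ (vertsA T).erase (rootOfA T d) := Finset.notMem_erase _ _
      have hXne : ((vertsA T).erase (rootOfA T d)).Nonempty := by
        rw [← Finset.card_pos, hXcard]; omega
      have hcode : pruneCode (pfOfA T d) ((vertsA T).erase (rootOfA T d)) =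
          pruneCode (pfOfA T' d) ((vertsA T).erase (rootOfA T d)) := by
        apply list_ext_getD (m := s - 1) (e := rootOfA T d)
        · rw [pruneCode_length, hXcard]
        · rw [pruneCode_length, hXcard']
        · rw [hground.code_getLast hrX hXne, hground'.code_getLast hrX hXne]
        · intro i hi
          have hi' : i < s - 2 := by omega
          have h3 := congrFun e3 ⟨i, hi'⟩
          simp only [hΦ, Function.comp_apply] at h3
          rw [← e1, ← e2] at h3
          exact h3
      have hpf := GroundedFn.code_injective hrX hground hground' hcode
      rw [reconstructA hdeg hnl hZ, reconstructA hdeg' hnl' hZ', ← e1, ← hpf]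
  rw [Set.ncard_coe_finset] at h1
  refine h1.trans ?_
  -- card of W
  have h2 : W ⊆ (Finset.univ.powersetCard s).biUnion
      (fun S => {S} ×ˢ (S ×ˢ Fintype.piFinset (fun _ : Fin (s-2) => S))) := by
    intro x hx
    obtain ⟨_, hx1, hx2, hx3⟩ := Finset.mem_filter.mp hx
    apply Finset.mem_biUnion.mpr
    refine ⟨x.1, Finset.mem_powersetCard.mpr ⟨Finset.subset_univ _, hx1⟩, ?_⟩
    rw [Finset.mem_product, Finset.mem_product]
    exact ⟨Finset.mem_singleton_self _, hx2, Fintype.mem_piFinset.mpr hx3⟩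
  refine (Finset.card_le_card h2).trans ?_
  refine (Finset.card_biUnion_le (s := Finset.univ.powersetCard s) (M := Finset (Fin n) × Fin n × (Fin (s - 2) → Fin n))
    (t := fun S => {S} ×ˢ (S ×ˢ Fintype.piFinset (fun _ : Fin (s-2) => S)))).trans ?_
  have h3 : ∀ S ∈ (Finset.univ : Finset (Fin n)).powersetCard s,
      ({S} ×ˢ (S ×ˢ Fintype.piFinset (fun _ : Fin (s-2) => S))).card = s * s ^ (s-2) := by
    intro S hS
    have hScard : S.card = s := (Finset.mem_powersetCard.mp hS).2
    rw [Finset.card_product, Finset.card_product, Finset.card_singleton, one_mul,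
      Fintype.card_piFinset, hScard]
    simp [hScard]
  apply le_of_eq
  rw [Finset.sum_congr rfl h3, Finset.sum_const, smul_eq_mul, Finset.card_powersetCard,
    Finset.card_univ, Fintype.card_fin]

section Bern
variable {p : ℝ}

instance bern_prob (p : ℝ) : IsProbabilityMeasure (bern p) := PMF.toMeasure.isProbabilityMeasure _

lemma bern_univ : bern p Set.univ = 1 := measure_univ

lemma bern_true (h1 : p ≤ 1) : bern p {true} = ENNReal.ofReal p := by
  rw [bern, PMF.toMeasure_apply_singleton _ _ (measurableSet_singleton _), PMF.bernoulli_apply]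
  simp [min_eq_left (Real.toNNReal_le_one.mpr h1), ENNReal.ofReal]

lemma bern_false (h0 : 0 ≤ p) (h1 : p ≤ 1) : bern p {false} = ENNReal.ofReal (1 - p) := by
  rw [bern, PMF.toMeasure_apply_singleton _ _ (measurableSet_singleton _), PMF.bernoulli_apply]
  simp only [Bool.cond_false]
  rw [min_eq_left (Real.toNNReal_le_one.mpr h1), ENNReal.ofReal]
  congr 1
  apply NNReal.eq
  rw [NNReal.coe_sub (Real.toNNReal_le_one.mpr h1), Real.coe_toNNReal _ h0,
    Real.coe_toNNReal _ (by linarith), NNReal.coe_one]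
end Bern

lemma measurableSet_all {n : ℕ} (A : Set ((Fin n × Fin n) → Bool)) : MeasurableSet A :=
  A.toFinite.measurableSet

/-- the deterministic part of IsClosedOutArb -/
def StructP {n : ℕ} (s : ℕ) (T : Finset (Fin n × Fin n)) : Prop :=
  IsArbForest T ∧ (verts T).card = s ∧ T.card = s - 1 ∧
  (∃ r ∈ verts T, ∀ w ∈ verts T, Reach T r w)

section Event
variable {n s : ℕ} {T : Finset (Fin n × Fin n)}

/-- coordinate constraints of the event -/
def evtC (T : Finset (Fin n × Fin n)) : (Fin n × Fin n) → Set Bool := fun a =>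
  if a ∈ T then {true} else if a.1 ∈ verts T ∧ a.2 ∉ verts T then {false} else Set.univ

lemma event_eq (hT : StructP s T) :
    {ω : (Fin n × Fin n) → Bool | IsClosedOutArb ω s T} = Set.univ.pi (evtC T) := by
  obtain ⟨⟨hdeg, hnl, hcyc⟩, hverts, hcard, hreach⟩ := hT
  ext ω
  simp only [Set.mem_setOf_eq, Set.mem_pi, Set.mem_univ, true_implies]
  constructor
  · intro hω a
    rw [evtC]
    obtain ⟨h1, _, _, _, _, h6⟩ := hω
    by_cases haT : a ∈ T
    · rw [if_pos haT]
      have := (h1 a haT).2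
      rw [Prod.mk.eta] at this
      simp [this]
    · rw [if_neg haT]
      by_cases hout : a.1 ∈ verts T ∧ a.2 ∉ verts T
      · rw [if_pos hout]
        have hne : a.1 ≠ a.2 := fun he => hout.2 (he ▸ hout.1)
        by_cases h : ω a = true
        · exfalso
          refine hout.2 (h6 a.1 a.2 ⟨hne, ?_⟩ hout.1)
          rwa [Prod.mk.eta]
        · simp only [Bool.not_eq_true] at h
          simp [h]
      · rw [if_neg hout]; trivial
  · intro hω
    refine ⟨?_, ⟨hdeg, hnl, hcyc⟩, hverts, hcard, hreach, ?_⟩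
    · intro a haT
      refine ⟨(hnl a haT).1, ?_⟩
      have := hω a
      rw [evtC, if_pos haT, Set.mem_singleton_iff] at this
      rwa [Prod.mk.eta]
    · intro x y hxy hx
      by_contra hy
      have haT : (x, y) ∉ T := fun h => hy (Finset.mem_union_right _
        (Finset.mem_image_of_mem Prod.snd h))
      have := hω (x, y)
      rw [evtC, if_neg haT, if_pos ⟨hx, hy⟩, Set.mem_singleton_iff] at this
      rw [hxy.2] at this
      simp at this
end Event

section MeasEvent
variable {n s : ℕ} {T : Finset (Fin n × Fin n)} {p : ℝ}

lemma measure_event (hT : StructP s T) (hsn : s ≤ n) (h0 : 0 ≤ p) (h1 : p ≤ 1) :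
    Dnp n p {ω | IsClosedOutArb ω s T} =
      ENNReal.ofReal p ^ (s - 1) * ENNReal.ofReal (1 - p) ^ (s * (n - s)) := by
  classical
  rw [event_eq hT, Dnp, Measure.pi_pi]
  set Out : Finset (Fin n × Fin n) := (verts T) ×ˢ (verts T)ᶜ with hOut
  have hdisj : Disjoint T Out := by
    rw [Finset.disjoint_right]
    intro a ha
    rw [hOut, Finset.mem_product, Finset.mem_compl] at ha
    intro haT
    exact ha.2 (Finset.mem_union_right _ (Finset.mem_image_of_mem Prod.snd haT))
  have hmemOut : ∀ a : Fin n × Fin n, a ∈ Out ↔ (a.1 ∈ verts T ∧ a.2 ∉ verts T) := by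
    intro a
    rw [hOut, Finset.mem_product, Finset.mem_compl]
  have step1 : ∏ a : Fin n × Fin n, bern p (evtC T a) =
      ∏ a ∈ T ∪ Out, bern p (evtC T a) := by
    rw [eq_comm]
    apply Finset.prod_subset (Finset.subset_univ _)
    intro a _ ha
    rw [Finset.mem_union] at ha
    push_neg at ha
    rw [evtC, if_neg ha.1, if_neg (fun hh => ha.2 ((hmemOut a).mpr hh)), bern_univ]
  rw [step1, Finset.prod_union hdisj]
  have e1 : ∏ a ∈ T, bern p (evtC T a) = ENNReal.ofReal p ^ (s - 1) := by
    rw [Finset.prod_congr rfl (g := fun _ => ENNReal.ofReal p) ?_, Finset.prod_const,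
      hT.2.2.1]
    intro a ha
    rw [evtC, if_pos ha, bern_true h1]
  have e2 : ∏ a ∈ Out, bern p (evtC T a) = ENNReal.ofReal (1 - p) ^ (s * (n - s)) := by
    rw [Finset.prod_congr rfl (g := fun _ => ENNReal.ofReal (1 - p)) ?_, Finset.prod_const]
    · congr 1
      rw [hOut, Finset.card_product, Finset.card_compl, Fintype.card_fin, hT.2.1]
    · intro a ha
      have haT : a ∉ T := Finset.disjoint_right.mp hdisj ha
      rw [evtC, if_neg haT, if_pos ((hmemOut a).mp ha), bern_false h0 h1]
  rw [e1, e2]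
end MeasEvent

lemma lintegral_count (n s : ℕ) (p : ℝ) :
    ∫⁻ ω, ({T : Finset (Fin n × Fin n) | IsClosedOutArb ω s T}.ncard : ENNReal) ∂ Dnp n p =
      ∑ T : Finset (Fin n × Fin n), Dnp n p {ω | IsClosedOutArb ω s T} := by
  classical
  have hrew : ∀ ω : (Fin n × Fin n) → Bool,
      ({T : Finset (Fin n × Fin n) | IsClosedOutArb ω s T}.ncard : ENNReal) =
      ∑ T : Finset (Fin n × Fin n),
        Set.indicator {ω' | IsClosedOutArb ω' s T} (fun _ => (1 : ENNReal)) ω := by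
    intro ω
    have h1 : {T : Finset (Fin n × Fin n) | IsClosedOutArb ω s T} =
        ↑(Finset.univ.filter (fun T => IsClosedOutArb ω s T)) := by
      ext T; simp
    rw [h1, Set.ncard_coe_finset, Finset.card_filter, Nat.cast_sum]
    apply Finset.sum_congr rfl
    intro T _
    by_cases h : IsClosedOutArb ω s T <;>
      simp [Set.indicator_apply, h, Set.mem_setOf_eq]
  calc ∫⁻ ω, ({T : Finset (Fin n × Fin n) | IsClosedOutArb ω s T}.ncard : ENNReal) ∂ Dnp n p
      = ∫⁻ ω, ∑ T : Finset (Fin n × Fin n),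
          Set.indicator {ω' | IsClosedOutArb ω' s T} (fun _ => (1 : ENNReal)) ω ∂ Dnp n p := by
        exact lintegral_congr hrew
    _ = ∑ T : Finset (Fin n × Fin n), ∫⁻ ω,
          Set.indicator {ω' | IsClosedOutArb ω' s T} (fun _ => (1 : ENNReal)) ω ∂ Dnp n p := by
        apply lintegral_finset_sum
        intro T _
        exact measurable_const.indicator (measurableSet_all _)
    _ = ∑ T : Finset (Fin n × Fin n), Dnp n p {ω | IsClosedOutArb ω s T} := by
        apply Finset.sum_congr rfl
        intro T _
        rw [lintegral_indicator_const (measurableSet_all _), one_mul]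

lemma real_main (c : ℝ) (hc : 1 < c) (n s : ℕ) (hn : c ≤ n) (hs : 2 ≤ s) (hsn : s ≤ n) :
    (n.choose s * (s * s ^ (s - 2)) : ℝ) * ((c / n) ^ (s - 1) * (1 - c / n) ^ (s * (n - s))) ≤
      (n / (s * c)) * Real.exp (1 - c + c * s / n + Real.log c) ^ s := by
  have hc0 : (0 : ℝ) < c := by linarith
  have hN0 : (0 : ℝ) < n := by linarith
  have hS0 : (0 : ℝ) < s := by
    have : (2 : ℝ) ≤ s := by exact_mod_cast hs
    linarith
  have hp0 : 0 ≤ c / n := le_of_lt (div_pos hc0 hN0)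
  have hp1 : c / n ≤ 1 := by rw [div_le_one hN0]; exact hn
  have hfac : (0 : ℝ) < (Nat.factorial s : ℝ) := by exact_mod_cast s.factorial_pos
  -- counting factor
  have h2 : ((s : ℝ) * (s : ℝ) ^ (s - 2)) = (s : ℝ) ^ (s - 1) := by
    rw [mul_comm, ← pow_succ]
    congr 1
    omega
  have h1 : (n.choose s : ℝ) ≤ (n : ℝ) ^ s / Nat.factorial s := Nat.choose_le_pow_div s n
  -- 1 - x ≤ e^{-x}
  have h3 : (1 - c / n) ^ (s * (n - s)) ≤ Real.exp (-(c / n)) ^ (s * (n - s)) := by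
    apply pow_le_pow_left₀ (by linarith)
    linarith [Real.add_one_le_exp (-(c / n))]
  have h4 : Real.exp (-(c / n)) ^ (s * (n - s)) = Real.exp (-(c * s) + c * s * s / n) := by
    rw [← Real.exp_nat_mul]
    congr 1
    have h5 : ((s * (n - s) : ℕ) : ℝ) = (s : ℝ) * ((n : ℝ) - s) := by
      push_cast [Nat.cast_sub hsn]
      ring
    rw [h5]
    field_simp
    ring
  -- RHS expansion
  have hR : Real.exp (1 - c + c * s / n + Real.log c) ^ s =
      Real.exp s * Real.exp (-(c * s) + c * s * s / n) * c ^ s := by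
    rw [← Real.exp_nat_mul]
    have expand : (s : ℝ) * (1 - c + c * s / n + Real.log c) =
        s + (-(c * s) + c * s * s / n) + s * Real.log c := by ring
    rw [expand, Real.exp_add, Real.exp_add, Real.exp_nat_mul, Real.exp_log hc0]
  -- core inequality
  obtain ⟨k, rfl⟩ : ∃ k, s = k + 1 := ⟨s - 1, by omega⟩
  have hkk : k + 1 - 1 = k := by omega
  have key : ((k + 1 : ℕ) : ℝ) ^ (k + 1) ≤
      Real.exp ((k + 1 : ℕ) : ℝ) * (Nat.factorial (k + 1) : ℝ) := by
    have h7 : ((k + 1 : ℕ) : ℝ) ^ (k + 1) / (Nat.factorial (k + 1) : ℝ) ≤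
        Real.exp ((k + 1 : ℕ) : ℝ) := by
      refine le_trans ?_ (Real.sum_le_exp_of_nonneg (by positivity) (k + 2))
      refine Finset.single_le_sum (f := fun i => ((k + 1 : ℕ) : ℝ) ^ i / Nat.factorial i) ?_ ?_
      · intro i _
        positivity
      · exact Finset.mem_range.mpr (by omega)
    calc ((k + 1 : ℕ) : ℝ) ^ (k + 1)
        = (((k + 1 : ℕ) : ℝ) ^ (k + 1) / (Nat.factorial (k + 1) : ℝ)) *
            (Nat.factorial (k + 1) : ℝ) := by field_simp
      _ ≤ Real.exp ((k + 1 : ℕ) : ℝ) * (Nat.factorial (k + 1) : ℝ) :=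
          mul_le_mul_of_nonneg_right h7 (le_of_lt hfac)
  have hE0 : (0 : ℝ) < Real.exp (-(c * ((k + 1 : ℕ) : ℝ)) +
      c * ((k + 1 : ℕ) : ℝ) * ((k + 1 : ℕ) : ℝ) / (n : ℝ)) := Real.exp_pos _
  have hNne : (n : ℝ) ≠ 0 := ne_of_gt hN0
  have main : ((n : ℝ) ^ (k + 1) / Nat.factorial (k + 1)) * ((k + 1 : ℕ) : ℝ) ^ k *
      (c / (n : ℝ)) ^ k ≤
      ((n : ℝ) / (((k + 1 : ℕ) : ℝ) * c)) * Real.exp ((k + 1 : ℕ) : ℝ) * c ^ (k + 1) := by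
    have eq1 : ((n : ℝ) ^ (k + 1) / Nat.factorial (k + 1)) * ((k + 1 : ℕ) : ℝ) ^ k *
        (c / (n : ℝ)) ^ k =
        (n : ℝ) * ((k + 1 : ℕ) : ℝ) ^ k * c ^ k / Nat.factorial (k + 1) := by
      rw [div_pow]
      field_simp
      ring
    have eq2 : ((n : ℝ) / (((k + 1 : ℕ) : ℝ) * c)) * Real.exp ((k + 1 : ℕ) : ℝ) * c ^ (k + 1) =
        (n : ℝ) * Real.exp ((k + 1 : ℕ) : ℝ) * c ^ k / ((k + 1 : ℕ) : ℝ) := by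
      field_simp
      ring
    rw [eq1, eq2, div_le_div_iff₀ hfac hS0]
    calc (n : ℝ) * ((k + 1 : ℕ) : ℝ) ^ k * c ^ k * ((k + 1 : ℕ) : ℝ)
        = ((n : ℝ) * c ^ k) * ((k + 1 : ℕ) : ℝ) ^ (k + 1) := by ring
      _ ≤ ((n : ℝ) * c ^ k) * (Real.exp ((k + 1 : ℕ) : ℝ) * Nat.factorial (k + 1)) :=
          mul_le_mul_of_nonneg_left key (by positivity)
      _ = (n : ℝ) * Real.exp ((k + 1 : ℕ) : ℝ) * c ^ k * Nat.factorial (k + 1) := by ring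
  -- assemble everything
  rw [hkk] at h2
  calc (n.choose (k + 1) * (((k + 1 : ℕ) : ℝ) * ((k + 1 : ℕ) : ℝ) ^ (k + 1 - 2)) : ℝ) *
        ((c / n) ^ (k + 1 - 1) * (1 - c / n) ^ ((k + 1) * (n - (k + 1))))
      ≤ (((n : ℝ) ^ (k + 1) / Nat.factorial (k + 1)) * ((k + 1 : ℕ) : ℝ) ^ k) *
        ((c / (n : ℝ)) ^ k * Real.exp (-(c * ((k + 1 : ℕ) : ℝ)) +
          c * ((k + 1 : ℕ) : ℝ) * ((k + 1 : ℕ) : ℝ) / (n : ℝ))) := by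
        rw [hkk, h2]
        apply mul_le_mul
        · exact mul_le_mul_of_nonneg_right h1 (by positivity)
        · rw [← h4]
          exact mul_le_mul_of_nonneg_left h3 (by positivity)
        · exact mul_nonneg (by positivity) (pow_nonneg (by linarith) _)
        · positivity
    _ = (((n : ℝ) ^ (k + 1) / Nat.factorial (k + 1)) * ((k + 1 : ℕ) : ℝ) ^ k *
          (c / (n : ℝ)) ^ k) * Real.exp (-(c * ((k + 1 : ℕ) : ℝ)) +
          c * ((k + 1 : ℕ) : ℝ) * ((k + 1 : ℕ) : ℝ) / (n : ℝ)) := by ring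
    _ ≤ (((n : ℝ) / (((k + 1 : ℕ) : ℝ) * c)) * Real.exp ((k + 1 : ℕ) : ℝ) * c ^ (k + 1)) *
          Real.exp (-(c * ((k + 1 : ℕ) : ℝ)) +
          c * ((k + 1 : ℕ) : ℝ) * ((k + 1 : ℕ) : ℝ) / (n : ℝ)) :=
        mul_le_mul_of_nonneg_right main hE0.le
    _ = ((n : ℝ) / (((k + 1 : ℕ) : ℝ) * c)) *
          Real.exp (1 - c + c * ((k + 1 : ℕ) : ℝ) / n + Real.log c) ^ (k + 1) := by
        rw [hR]
        ring

/-- First-moment bound: for `p = c/n`, the expected number of out-arborescences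
on `s` vertices with no arcs leaving them is at most
`(n/(sc)) · (e^{1 - c + cs/n + ln c})^s`; in particular, for
`10 log n ≤ s ≤ βn` with `β = 1 - 1.1/c - (ln c)/c` it is at most
`(n/(sc)) · e^{-s/10}`, i.e. `1/poly(n)`. -/
theorem stmt10 (c : ℝ) (hc : 1 < c) (n s : ℕ) (hn : c ≤ n) (hs1 : 1 ≤ s) (hsn : s ≤ n) :
    (∫⁻ ω, ({T : Finset (Fin n × Fin n) | IsClosedOutArb ω s T}.ncard : ENNReal)
        ∂ Dnp n (c / n)) ≤
      ENNReal.ofReal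
        ((n / (s * c)) * Real.exp (1 - c + c * s / n + Real.log c) ^ s) ∧
    (10 * Real.log n ≤ s → (s : ℝ) ≤ (1 - 1.1 / c - Real.log c / c) * n →
      (∫⁻ ω, ({T : Finset (Fin n × Fin n) | IsClosedOutArb ω s T}.ncard : ENNReal)
          ∂ Dnp n (c / n)) ≤
        ENNReal.ofReal ((n / (s * c)) * Real.exp (-(s : ℝ) / 10))) := by
  classical
  have hc0 : (0 : ℝ) < c := by linarith
  have hN0 : (0 : ℝ) < n := by linarith
  have hn0 : 0 < n := by exact_mod_cast hN0
  have hp0 : 0 ≤ c / n := le_of_lt (div_pos hc0 hN0)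
  have hp1 : c / n ≤ 1 := by rw [div_le_one hN0]; exact hn
  have hS0 : (0 : ℝ) < s := by
    have : (1 : ℝ) ≤ s := by exact_mod_cast hs1
    linarith
  -- the integral equals card * q
  have hval : (∫⁻ ω, ({T : Finset (Fin n × Fin n) | IsClosedOutArb ω s T}.ncard : ENNReal)
        ∂ Dnp n (c / n)) =
      ((Finset.univ.filter (fun T : Finset (Fin n × Fin n) => StructP s T)).card : ENNReal) *
        (ENNReal.ofReal (c / n) ^ (s - 1) * ENNReal.ofReal (1 - c / n) ^ (s * (n - s))) := by
    rw [lintegral_count]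
    rw [← Finset.sum_subset (Finset.filter_subset
      (fun T : Finset (Fin n × Fin n) => StructP s T) Finset.univ) ?_]
    · rw [Finset.sum_congr rfl (g := fun T => ENNReal.ofReal (c / n) ^ (s - 1) *
          ENNReal.ofReal (1 - c / n) ^ (s * (n - s))) ?_, Finset.sum_const, nsmul_eq_mul]
      intro T hT
      exact measure_event (Finset.mem_filter.mp hT).2 hsn hp0 hp1
    · intro T _ hT
      rw [Finset.mem_filter] at hT
      push_neg at hT
      have hempty : {ω : (Fin n × Fin n) → Bool | IsClosedOutArb ω s T} = ∅ := by
        ext ω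
        simp only [Set.mem_setOf_eq, Set.mem_empty_iff_false, iff_false]
        intro hh
        exact hT (Finset.mem_univ T) ⟨hh.2.1, hh.2.2.1, hh.2.2.2.1, hh.2.2.2.2.1⟩
      rw [hempty, measure_empty]
  -- main bound
  have hmain : (∫⁻ ω, ({T : Finset (Fin n × Fin n) | IsClosedOutArb ω s T}.ncard : ENNReal)
        ∂ Dnp n (c / n)) ≤
      ENNReal.ofReal ((n / (s * c)) * Real.exp (1 - c + c * s / n + Real.log c) ^ s) := by
    rw [hval]
    by_cases hs2 : 2 ≤ s
    case neg =>
      -- s = 1 : no valid T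
      have hs1' : s = 1 := by omega
      have hemp : (Finset.univ.filter (fun T : Finset (Fin n × Fin n) => StructP s T)) = ∅ := by
        rw [Finset.filter_eq_empty_iff]
        rintro T - ⟨_, hverts, hcard, _⟩
        rw [hs1'] at hverts hcard
        simp only [Nat.sub_self] at hcard
        rw [Finset.card_eq_zero] at hcard
        subst hcard
        simp [verts] at hverts
      rw [hemp]
      simp
    case pos =>
      -- counting
      have hcount : (Finset.univ.filter
          (fun T : Finset (Fin n × Fin n) => StructP s T)).card ≤
          n.choose s * (s * s ^ (s - 2)) := by
        have hset : {T : Finset (Fin n × Fin n) | StructP s T} =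
            ↑(Finset.univ.filter (fun T : Finset (Fin n × Fin n) => StructP s T)) := by
          ext T; simp
        have hsub : {T : Finset (Fin n × Fin n) | StructP s T} ⊆
            {T : Finset (Fin n × Fin n) | (∀ v, inDegA T v ≤ 1) ∧ (∀ a ∈ T, a.1 ≠ a.2) ∧
              (vertsA T).card = s ∧ T.card = s - 1 ∧
              (∃ r ∈ vertsA T, ∀ w ∈ vertsA T,
                Relation.ReflTransGen (fun x y => (x, y) ∈ T) r w)} := by
          rintro T ⟨⟨hdeg, hnl, _⟩, hverts, hcard, hreach⟩
          exact ⟨hdeg, fun a ha => (hnl a ha).1, hverts, hcard, hreach⟩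
        calc (Finset.univ.filter (fun T : Finset (Fin n × Fin n) => StructP s T)).card
            = {T : Finset (Fin n × Fin n) | StructP s T}.ncard := by
              rw [hset, Set.ncard_coe_finset]
          _ ≤ _ := Set.ncard_le_ncard hsub (Set.toFinite _)
          _ ≤ n.choose s * (s * s ^ (s - 2)) := arb_count n s hs2 hn0
      -- convert to ofReal and compare
      calc ((Finset.univ.filter (fun T : Finset (Fin n × Fin n) => StructP s T)).card : ENNReal) *
            (ENNReal.ofReal (c / n) ^ (s - 1) * ENNReal.ofReal (1 - c / n) ^ (s * (n - s)))
          ≤ ((n.choose s * (s * s ^ (s - 2)) : ℕ) : ENNReal) *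
            (ENNReal.ofReal (c / n) ^ (s - 1) * ENNReal.ofReal (1 - c / n) ^ (s * (n - s))) := by
            apply mul_le_mul_left
            exact_mod_cast Nat.cast_le.mpr hcount
        _ = ENNReal.ofReal ((n.choose s * (s * s ^ (s - 2)) : ℕ) *
              ((c / n) ^ (s - 1) * (1 - c / n) ^ (s * (n - s)))) := by
            rw [ENNReal.ofReal_mul (by positivity), ENNReal.ofReal_natCast,
              ENNReal.ofReal_mul (by positivity), ENNReal.ofReal_pow hp0,
              ENNReal.ofReal_pow (by linarith)]
        _ ≤ ENNReal.ofReal ((n / (s * c)) * Real.exp (1 - c + c * s / n + Real.log c) ^ s) := by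
            apply ENNReal.ofReal_le_ofReal
            have := real_main c hc n s hn hs2 hsn
            calc ((n.choose s * (s * s ^ (s - 2)) : ℕ) : ℝ) *
                  ((c / n) ^ (s - 1) * (1 - c / n) ^ (s * (n - s)))
                = (n.choose s * (s * s ^ (s - 2)) : ℝ) *
                  ((c / n) ^ (s - 1) * (1 - c / n) ^ (s * (n - s))) := by push_cast; ring
              _ ≤ _ := this
  refine ⟨hmain, fun _ hβ => le_trans hmain (ENNReal.ofReal_le_ofReal ?_)⟩
  -- part 2
  have hcsn : c * s / n ≤ c - 1.1 - Real.log c := by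
    have h1 : c * s / n = (c / n) * s := by ring
    have h2 : (c / n) * s ≤ (c / n) * ((1 - 1.1 / c - Real.log c / c) * n) :=
      mul_le_mul_of_nonneg_left hβ hp0
    have h3 : (c / n) * ((1 - 1.1 / c - Real.log c / c) * n) = c - 1.1 - Real.log c := by
      field_simp
    rw [h1]
    rw [h3] at h2
    exact h2
  have hexp : 1 - c + c * s / n + Real.log c ≤ -(1 / 10) := by
    have : (1.1 : ℝ) = 11 / 10 := by norm_num
    linarith
  apply mul_le_mul_of_nonneg_left _ (by positivity)
  calc Real.exp (1 - c + c * s / n + Real.log c) ^ s ≤ Real.exp (-(1 / 10)) ^ s := by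
        apply pow_le_pow_left₀ (Real.exp_nonneg _)
        exact Real.exp_le_exp.mpr hexp
    _ = Real.exp (-(s : ℝ) / 10) := by
        rw [← Real.exp_nat_mul]
        congr 1
        ring
end

section
/- Suppose a maximum arborescence forest F of digraph G is updated along a feasible path P from root r to root r' after inserting arc a = (u, v), producing F' = UPDATE(F, P). Then v lies in the in-component of r' in G, and the number of deleted arcs satisfies |F \ F'| ≤ |T'|, where T' is the arborescence of r' in F. -/
open Finset

variable {V : Type*} [Fintype V] [DecidableEq V]

lemma zip_tail_cons {x y a : V} {l : List V} (h : (x, y) ∈ l.zip l.tail) :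
    (x, y) ∈ (a :: l).zip (a :: l).tail := by
  cases l with
  | nil => simp at h
  | cons c cs => simpa using Or.inr h

lemma chain'_erase_insert {u v : V} {G : Finset (V × V)} : ∀ {l : List V},
    l.Chain' (fun x y => (x, y) ∈ insert (u, v) G) → u ∉ l →
    l.Chain' (fun x y => (x, y) ∈ G) := by
  intro l
  induction l with
  | nil => intro _ _; exact List.IsChain.nil
  | cons x l ih =>
    intro hc hu
    cases l with
    | nil => exact List.IsChain.singleton _
    | cons y m =>
      simp only [List.Chain', List.isChain_cons_cons] at hc ⊢
      refine ⟨?_, ih hc.2 (fun h => hu (List.mem_cons_of_mem _ h))⟩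
      rcases Finset.mem_insert.mp hc.1 with h | h
      · have hx : x = u := congrArg Prod.fst h
        subst hx
        exact absurd List.mem_cons_self hu
      · exact h

lemma mem_zip_tail_iff {x y : V} : ∀ {l : List V},
    (x, y) ∈ l.zip l.tail ↔ ∃ s t, l = s ++ x :: y :: t := by
  intro l
  constructor
  · induction l with
    | nil => simp
    | cons a l ih =>
      cases l with
      | nil => simp
      | cons b s =>
        intro h
        simp only [List.tail_cons, List.zip_cons_cons, List.mem_cons] at h
        rcases h with h | h
        · rw [Prod.mk.injEq] at h
          exact ⟨[], s, by simp [h.1, h.2]⟩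
        · obtain ⟨s1, t1, hst⟩ := ih h
          exact ⟨a :: s1, t1, by simp [hst]⟩
  · rintro ⟨s, t, rfl⟩
    induction s with
    | nil => simp
    | cons a s ih => exact zip_tail_cons ih

lemma mem_tail_pred {w : V} : ∀ {l : List V}, w ∈ l.tail → ∃ x, (x, w) ∈ l.zip l.tail := by
  intro l
  induction l with
  | nil => simp
  | cons a l ih =>
    cases l with
    | nil => simp
    | cons b s =>
      intro h
      simp only [List.tail_cons] at h
      rcases List.mem_cons.mp h with h | h
      · exact ⟨a, by simp [h]⟩
      · obtain ⟨x, hx⟩ := ih (by simpa using h)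
        exact ⟨x, zip_tail_cons hx⟩

lemma chain'_reach {R : V → V → Prop} : ∀ {l : List V}, l.Chain' R →
    ∀ {a b}, l.head? = some a → l.getLast? = some b → Relation.ReflTransGen R a b := by
  intro l
  induction l with
  | nil => simp
  | cons x l ih =>
    intro hc a b ha hb
    simp only [List.head?_cons, Option.some_inj] at ha
    subst ha
    cases l with
    | nil => simp at hb; subst hb; exact .refl
    | cons y t =>
      simp only [List.Chain', List.isChain_cons_cons] at hc
      have hb' : (y :: t).getLast? = some b := by
        simpa [List.getLast?_cons_cons] using hb
      exact Relation.ReflTransGen.head hc.1 (ih hc.2 rfl hb')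

/-- If a maximum arborescence forest `F` of `G` is updated along a feasible path
`p` from root `r` to root `r'` created by inserting arc `a = (u, v)`, then `v`
lies in the in-component of `r'` in `G`, and the number of deleted arcs is at
most the number of vertices of the arborescence `T'` of `r'` in `F`. -/
theorem stmt16 (G F : Finset (V × V)) (u v r r' : V) (p : List V)
    (hF : IsMaxArbForest G F) (ha : (u, v) ∉ G) (hrr : r ≠ r')
    (hr : IsRoot F r) (hr' : IsRoot F r')
    (hp : FeasiblePath (insert (u, v) G) F r r' p)
    (hmem : (u, v) ∈ pathArcs p) :
    Reach G v r' ∧ (F \ update F p).card ≤ {w : V | WReach F r' w}.ncard := by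
  obtain ⟨⟨hchain, hnodup⟩, hhead, hlast, p₁, p₂, hsplit, hp₁, hp₂⟩ := hp
  have hdeg : ∀ w, inDeg F w ≤ 1 := hF.2.1.1
  constructor
  · -- Reach G v r'
    rw [pathArcs, List.mem_toFinset, mem_zip_tail_iff] at hmem
    obtain ⟨s, t, hst⟩ := hmem
    have hsuf : (v :: t) <:+ p := ⟨s ++ [u], by simp [hst]⟩
    have hch : (v :: t).Chain' (fun x y => (x, y) ∈ insert (u, v) G) := hchain.suffix hsuf
    have hu : u ∉ v :: t := by
      rw [hst] at hnodup
      rw [show s ++ u :: v :: t = (s ++ [u]) ++ v :: t by simp, List.nodup_append] at hnodup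
      exact fun hmem' => hnodup.2.2 u (by simp) u hmem' rfl
    have hch' : (v :: t).Chain' (fun x y => (x, y) ∈ G) := chain'_erase_insert hch hu
    have hlast' : (v :: t).getLast? = some r' := by
      rw [hst] at hlast
      rwa [show s ++ u :: v :: t = (s ++ [u]) ++ v :: t by simp,
        List.getLast?_append_of_ne_nil _ (by simp)] at hlast
    exact chain'_reach hch' rfl hlast'
  · -- cardinality bound
    have key : ∀ a ∈ F \ update F p, a.2 ∈ {w : V | WReach F r' w} := by
      rintro ⟨x0, w⟩ hxw
      rw [Finset.mem_sdiff] at hxw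
      obtain ⟨hFa, hnu⟩ := hxw
      have h1 : (x0, w) ∉ F.filter (fun a => a.2 ∉ p.tail) :=
        fun h => hnu (Finset.mem_union_left _ h)
      have h2 : (x0, w) ∉ pathArcs p := fun h => hnu (Finset.mem_union_right _ h)
      have hwtail : w ∈ p.tail := by
        by_contra h
        exact h1 (Finset.mem_filter.mpr ⟨hFa, h⟩)
      have hcase : w ∈ p₂ ∨ w ∈ p₁.tail := by
        rw [hsplit] at hwtail
        cases p₁ with
        | nil => exact Or.inl (List.mem_of_mem_tail (by simpa using hwtail))
        | cons a s =>
          simp only [List.cons_append, List.tail_cons] at hwtail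
          rcases List.mem_append.mp hwtail with h | h
          · exact Or.inr (by simpa using h)
          · exact Or.inl h
      rcases hcase with h | h
      · exact hp₂ w h
      · exfalso
        obtain ⟨x, hx⟩ := mem_tail_pred h
        have hxArc : (x, w) ∈ pathArcs p₁ := by
          rw [pathArcs, List.mem_toFinset]; exact hx
        have hxF : (x, w) ∈ F := (hp₁ _ hxArc).1
        have heq : (x0, w) = (x, w) := by
          have hcard := hdeg w
          rw [inDeg] at hcard
          exact Finset.card_le_one.mp hcard _
            (Finset.mem_filter.mpr ⟨hFa, rfl⟩) _ (Finset.mem_filter.mpr ⟨hxF, rfl⟩)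
        apply h2
        rw [heq, pathArcs, List.mem_toFinset, mem_zip_tail_iff]
        rw [pathArcs, List.mem_toFinset, mem_zip_tail_iff] at hxArc
        obtain ⟨s, t, hst⟩ := hxArc
        exact ⟨s, t ++ p₂, by simp [hsplit, hst]⟩
    have hinj : Set.InjOn Prod.snd ((F \ update F p : Finset (V × V)) : Set (V × V)) := by
      rintro ⟨x1, w1⟩ hx1 ⟨x2, w2⟩ hx2 hw
      simp only [Finset.coe_sdiff, Set.mem_diff, Finset.mem_coe] at hx1 hx2
      simp only at hw
      subst hw
      have hcard := hdeg w1
      rw [inDeg] at hcard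
      exact Finset.card_le_one.mp hcard _
        (Finset.mem_filter.mpr ⟨hx1.1, rfl⟩) _ (Finset.mem_filter.mpr ⟨hx2.1, rfl⟩)
    calc (F \ update F p).card
        = ((F \ update F p : Finset (V × V)) : Set (V × V)).ncard :=
          (Set.ncard_coe_finset _).symm
      _ ≤ {w : V | WReach F r' w}.ncard :=
          Set.ncard_le_ncard_of_injOn Prod.snd
            (fun a haa => key a (by simpa using haa)) hinj (Set.toFinite _)
end

section
/- Let F be a maximum arborescence forest of digraph G. Then the in-components (in G) of distinct roots of F are pairwise disjoint, each root's in-component is fully contained in its own arborescence, and hence the sum over roots r of the size of the in-component of r is at most n. -/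
open Finset

variable {V : Type*} [Fintype V] [DecidableEq V]

/- ## Auxiliary lemmas -/

lemma reach_wreach {F : Finset (V × V)} {u v : V} (h : Reach F u v) : WReach F u v :=
  Relation.ReflTransGen.mono (fun _ _ h => Or.inl h) _ _ h

lemma wreach_symm {F : Finset (V × V)} {u v : V} (h : WReach F u v) : WReach F v u :=
  by haveI : Std.Symm (fun x y : V => (x, y) ∈ F ∨ (y, x) ∈ F) := ⟨fun _ _ h => h.symm⟩
     exact Std.Symm.symm (r := Relation.ReflTransGen (fun x y : V => (x, y) ∈ F ∨ (y, x) ∈ F)) _ _ h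

lemma uniq_in {F : Finset (V × V)} (hdeg : ∀ v, inDeg F v ≤ 1) {x y c : V}
    (hx : (x, c) ∈ F) (hy : (y, c) ∈ F) : x = y := by
  have h1 : (x, c) ∈ F.filter (fun a => a.2 = c) := mem_filter.2 ⟨hx, rfl⟩
  have h2 : (y, c) ∈ F.filter (fun a => a.2 = c) := mem_filter.2 ⟨hy, rfl⟩
  have := Finset.card_le_one.mp (hdeg c) _ h1 _ h2
  exact congrArg Prod.fst this

lemma reach_root {F : Finset (V × V)} {r t : V} (hr : IsRoot F r) (h : Reach F t r) :
    t = r := by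
  have h' : Relation.ReflTransGen (fun x y => (x, y) ∈ F) t r := h
  rcases h'.cases_tail with h | ⟨c, _, hc⟩
  · exact h.symm
  · exfalso
    have : (c, r) ∈ F.filter (fun a => a.2 = r) := mem_filter.2 ⟨hc, rfl⟩
    rw [Finset.card_eq_zero.mp hr] at this
    exact absurd this (Finset.notMem_empty _)

lemma wreach_meet {F : Finset (V × V)} (hdeg : ∀ v, inDeg F v ≤ 1) {u v : V}
    (h : WReach F u v) : ∃ t, Reach F t u ∧ Reach F t v := by
  have h' : Relation.ReflTransGen (fun x y => (x, y) ∈ F ∨ (y, x) ∈ F) u v := h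
  clear h
  induction h' using Relation.ReflTransGen.head_induction_on with
  | refl => exact ⟨v, .refl, .refl⟩
  | @head a c hac hcb ih =>
    obtain ⟨t, h1, h2⟩ := ih
    rcases hac with hf | hb
    · have h1' : Relation.ReflTransGen (fun x y => (x, y) ∈ F) t c := h1
      rcases h1'.cases_tail with rfl | ⟨d, hd1, hd2⟩
      · exact ⟨a, .refl, (Relation.ReflTransGen.single hf).trans h2⟩
      · have : d = a := uniq_in hdeg hd2 hf
        subst this
        exact ⟨t, hd1, h2⟩
    · exact ⟨t, h1.tail hb, h2⟩

lemma root_wreach_reach {F : Finset (V × V)} (hdeg : ∀ v, inDeg F v ≤ 1) {r v : V}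
    (hr : IsRoot F r) (h : WReach F r v) : Reach F r v := by
  obtain ⟨t, h1, h2⟩ := wreach_meet hdeg h
  rwa [reach_root hr h1] at h2

lemma isAcyclic_mono' {H K : SimpleGraph V} (hle : H ≤ K) (hK : K.IsAcyclic) : H.IsAcyclic := by
  intro v c hc
  have hsub : ∀ e ∈ c.edges, e ∈ K.edgeSet := fun e he =>
    SimpleGraph.edgeSet_mono hle (c.edges_subset_edgeSet he)
  exact hK (c.transfer K hsub) (hc.transfer hsub)

lemma acyclic_sup_edge {H : SimpleGraph V} (hH : H.IsAcyclic) {a b : V}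
    (hr : ¬ H.Reachable a b) :
    (H ⊔ SimpleGraph.fromEdgeSet {s(a, b)}).IsAcyclic := by
  intro x c hc
  by_cases he : s(a, b) ∈ c.edges
  · have hmem := (SimpleGraph.adj_and_reachable_delete_edges_iff_exists_cycle).mpr ⟨x, c, hc, he⟩
    refine hr (hmem.2.mono ?_)
    intro u v huv
    rw [SimpleGraph.deleteEdges_adj, SimpleGraph.sup_adj, SimpleGraph.fromEdgeSet_adj] at huv
    obtain ⟨h1 | h2, h3⟩ := huv
    · exact h1
    · exact absurd h2.1 h3
  · have hsub : ∀ e ∈ c.edges, e ∈ H.edgeSet := by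
      intro e hce
      have hmem := c.edges_subset_edgeSet hce
      rw [SimpleGraph.edgeSet_sup, SimpleGraph.edgeSet_fromEdgeSet, Set.mem_union] at hmem
      rcases hmem with h | h
      · exact h
      · exfalso
        have h1 := h.1
        rw [Set.mem_singleton_iff] at h1
        exact he (h1 ▸ hce)
    exact hH (c.transfer H hsub) (hc.transfer hsub)

lemma fromRel_mono {F F' : Finset (V × V)} (h : F' ⊆ F) :
    (SimpleGraph.fromRel fun u v => (u, v) ∈ F') ≤ SimpleGraph.fromRel fun u v => (u, v) ∈ F := by
  intro x y hxy
  rw [SimpleGraph.fromRel_adj] at *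
  exact ⟨hxy.1, hxy.2.imp (@h _) (@h _)⟩

lemma fromRel_insert (F : Finset (V × V)) (a : V × V) :
    (SimpleGraph.fromRel fun x y => (x, y) ∈ insert a F) =
      (SimpleGraph.fromRel fun x y => (x, y) ∈ F) ⊔ SimpleGraph.fromEdgeSet {s(a.1, a.2)} := by
  ext x y
  simp only [SimpleGraph.fromRel_adj, SimpleGraph.sup_adj, SimpleGraph.fromEdgeSet_adj,
    Finset.mem_insert, Set.mem_singleton_iff, Sym2.eq_iff, Prod.ext_iff]
  tauto

lemma reachable_wreach {F : Finset (V × V)} {x y : V}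
    (h : (SimpleGraph.fromRel fun u v => (u, v) ∈ F).Reachable x y) : WReach F x y := by
  obtain ⟨w⟩ := h
  induction w with
  | nil => exact .refl
  | cons ha _ ih => exact Relation.ReflTransGen.head ((SimpleGraph.fromRel_adj _ _ _).mp ha).2 ih

lemma key (G : Finset (V × V)) (r : V) :
    ∀ (l : List V) (F : Finset (V × V)) (v : V), IsMaxArbForest G F → IsRoot F r →
      List.Chain (fun x y => (x, y) ∈ G) v l →
      (v :: l).getLast (List.cons_ne_nil _ _) = r → WReach F r v := by
  intro l
  induction l with
  | nil =>
    intro F v _ _ _ hlast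
    simp only [List.getLast_singleton] at hlast
    exact hlast ▸ Relation.ReflTransGen.refl
  | cons u rest ih =>
    intro F v hF hr hchain hlast
    simp only [List.Chain, List.isChain_cons_cons] at hchain
    obtain ⟨hvu, hchain'⟩ := hchain
    have hlast' : (u :: rest).getLast (List.cons_ne_nil _ _) = r := by
      rwa [List.getLast_cons (List.cons_ne_nil _ _)] at hlast
    have hu : WReach F r u := ih F u hF hr hchain' hlast'
    by_cases hv : WReach F r v
    · exact hv
    exfalso
    obtain ⟨hFG, ⟨hdeg, hpair, hacy⟩, hmax⟩ := hF
    have hvne : v ≠ u := fun h => hv (h ▸ hu)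
    by_cases hur : u = r
    · -- add the arc (v, u) with u = r : bigger forest, contradiction
      subst hur
      have hnotin : (v, u) ∉ F := fun h => hv (Relation.ReflTransGen.single (Or.inr h))
      have hsub1 : insert (v, u) F ⊆ G := Finset.insert_subset hvu hFG
      have harb : IsArbForest (insert (v, u) F) := by
        refine ⟨?_, ?_, ?_⟩
        · intro x
          unfold inDeg
          rw [Finset.filter_insert]
          by_cases hx : u = x
          · subst hx
            rw [if_pos rfl, Finset.card_eq_zero.mp hr]
            simp
          · rw [if_neg hx]
            exact hdeg x
        · rintro ⟨a1, a2⟩ ha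
          rcases Finset.mem_insert.mp ha with heq | haF
          · simp only [Prod.mk.injEq] at heq
            obtain ⟨rfl, rfl⟩ := heq
            refine ⟨hvne, fun hcon => ?_⟩
            rcases Finset.mem_insert.mp hcon with h | h
            · simp only [Prod.mk.injEq] at h
              exact hvne h.2
            · exact hv (Relation.ReflTransGen.single (Or.inl h))
          · refine ⟨(hpair _ haF).1, fun hcon => ?_⟩
            rcases Finset.mem_insert.mp hcon with h | h
            · simp only [Prod.mk.injEq] at h
              obtain ⟨rfl, rfl⟩ := h
              exact hv (Relation.ReflTransGen.single (Or.inl haF))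
            · exact (hpair _ haF).2 h
        · rw [fromRel_insert]
          exact acyclic_sup_edge hacy (fun h => hv (wreach_symm (reachable_wreach h)))
      have := hmax _ hsub1 harb
      rw [Finset.card_insert_of_notMem hnotin] at this
      omega
    · -- swap the parent arc of u
      have hru : Reach F r u := root_wreach_reach hdeg hr hu
      have hru' : Relation.ReflTransGen (fun x y => (x, y) ∈ F) r u := hru
      rcases hru'.cases_tail with h | ⟨w, hw, hwu⟩
      · exact hur h
      have hvu_ne : (v, u) ∉ F := fun h => hv (hu.tail (Or.inr h))
      set F' := insert (v, u) (F.erase (w, u)) with hF'def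
      have hsub' : F' ⊆ G := Finset.insert_subset hvu ((Finset.erase_subset _ _).trans hFG)
      have hfilter_u : F.filter (fun a => a.2 = u) = {(w, u)} := by
        apply Finset.eq_singleton_iff_unique_mem.mpr
        refine ⟨Finset.mem_filter.mpr ⟨hwu, rfl⟩, ?_⟩
        rintro ⟨a1, a2⟩ ha
        obtain ⟨haF, ha2⟩ := Finset.mem_filter.mp ha
        simp only at ha2
        subst ha2
        rw [uniq_in hdeg haF hwu]
      have hdeg' : ∀ x, inDeg F' x ≤ 1 := by
        intro x
        unfold inDeg
        rw [hF'def, Finset.filter_insert]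
        by_cases hx : u = x
        · subst hx
          rw [if_pos rfl, Finset.filter_erase, hfilter_u, Finset.erase_singleton]
          simp
        · rw [if_neg hx, Finset.filter_erase]
          exact (Finset.card_erase_le).trans (hdeg x)
      have hpair' : ∀ a ∈ F', a.1 ≠ a.2 ∧ (a.2, a.1) ∉ F' := by
        rintro ⟨a1, a2⟩ ha
        rcases Finset.mem_insert.mp ha with heq | hmem
        · simp only [Prod.mk.injEq] at heq
          obtain ⟨rfl, rfl⟩ := heq
          refine ⟨hvne, fun hcon => ?_⟩
          rcases Finset.mem_insert.mp hcon with h | h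
          · simp only [Prod.mk.injEq] at h
            exact hvne h.2
          · exact hv (hu.tail (Or.inl (Finset.mem_of_mem_erase h)))
        · have haF := Finset.mem_of_mem_erase hmem
          refine ⟨(hpair _ haF).1, fun hcon => ?_⟩
          rcases Finset.mem_insert.mp hcon with h | h
          · simp only [Prod.mk.injEq] at h
            obtain ⟨rfl, rfl⟩ := h
            exact hv (hu.tail (Or.inl haF))
          · exact (hpair _ haF).2 (Finset.mem_of_mem_erase h)
      have hacy' : (SimpleGraph.fromRel fun x y => (x, y) ∈ F').IsAcyclic := by
        rw [hF'def, fromRel_insert]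
        apply acyclic_sup_edge (isAcyclic_mono' (fromRel_mono (Finset.erase_subset _ _)) hacy)
        intro hre
        exact hv (hu.trans (wreach_symm (reachable_wreach
          (hre.mono (fromRel_mono (Finset.erase_subset _ _))))))
      have hcard' : F'.card = F.card := by
        have hpos : 0 < F.card := Finset.card_pos.mpr ⟨_, hwu⟩
        rw [hF'def, Finset.card_insert_of_notMem (fun h => hvu_ne (Finset.mem_of_mem_erase h)),
          Finset.card_erase_of_mem hwu]
        omega
      have hmax' : IsMaxArbForest G F' :=
        ⟨hsub', ⟨hdeg', hpair', hacy'⟩,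
          fun F'' h1 h2 => le_trans (hmax F'' h1 h2) (le_of_eq hcard'.symm)⟩
      have hroot' : IsRoot F' r := by
        unfold IsRoot inDeg
        rw [hF'def, Finset.filter_insert, if_neg hur, Finset.filter_erase,
          Finset.card_eq_zero.mp hr, Finset.erase_empty, Finset.card_empty]
      have hu' : WReach F' r u := ih F' u hmax' hroot' hchain' hlast'
      have hru2 : Relation.ReflTransGen (fun x y => (x, y) ∈ F') r u :=
        root_wreach_reach hdeg' hroot' hu'
      have main : ∀ b, Relation.ReflTransGen (fun x y => (x, y) ∈ F') r b →
          Reach F r b ∧ b ≠ u := by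
        intro b hb
        induction hb with
        | refl => exact ⟨.refl, fun h => hur h.symm⟩
        | @tail p q hstep1 hstep2 ih2 =>
          rcases Finset.mem_insert.mp hstep2 with heq | hmem
          · simp only [Prod.mk.injEq] at heq
            obtain ⟨rfl, rfl⟩ := heq
            exact absurd (reach_wreach ih2.1) hv
          · have hmemF := Finset.mem_of_mem_erase hmem
            refine ⟨ih2.1.tail hmemF, fun hqu => ?_⟩
            subst hqu
            exact (Finset.mem_erase.mp hmem).1 (by rw [uniq_in hdeg hmemF hwu])
      exact (main u hru2).2 rfl


/-- For a maximum arborescence forest `F` of `G`: the in-components (in `G`) of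
distinct roots of `F` are pairwise disjoint, each root's in-component is
contained in its own arborescence, and the in-component sizes of the roots sum
to at most `n`. -/
theorem stmt19 (G F : Finset (V × V)) (hF : IsMaxArbForest G F) :
    (∀ r r' : V, IsRoot F r → IsRoot F r' → r ≠ r' →
      Disjoint {v : V | Reach G v r} {v : V | Reach G v r'}) ∧
    (∀ r : V, IsRoot F r → {v : V | Reach G v r} ⊆ {v : V | WReach F r v}) ∧
    ∑ r ∈ Finset.univ.filter (fun r => inDeg F r = 0), {v : V | Reach G v r}.ncard
      ≤ Fintype.card V := by
  classical
  have hdeg : ∀ v, inDeg F v ≤ 1 := hF.2.1.1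
  have part2 : ∀ r : V, IsRoot F r → {v : V | Reach G v r} ⊆ {v : V | WReach F r v} := by
    intro r hr v hv
    simp only [Set.mem_setOf_eq] at hv ⊢
    obtain ⟨l, hchain, hlast⟩ := List.exists_isChain_cons_of_relationReflTransGen hv
    exact key G r l F v hF hr hchain hlast
  have part1 : ∀ r r' : V, IsRoot F r → IsRoot F r' → r ≠ r' →
      Disjoint {v : V | Reach G v r} {v : V | Reach G v r'} := by
    intro r r' hr hr' hne
    rw [Set.disjoint_left]
    intro v h1 h2
    have w1 : WReach F r v := part2 r hr h1
    have w2 : WReach F r' v := part2 r' hr' h2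
    have hrr : WReach F r r' := w1.trans (wreach_symm w2)
    exact hne (reach_root hr' (root_wreach_reach hdeg hr hrr))
  refine ⟨part1, part2, ?_⟩
  have hset : ∀ r : V, {v : V | Reach G v r} = ↑(Finset.univ.filter fun v => Reach G v r) := by
    intro r; ext v; simp
  calc ∑ r ∈ Finset.univ.filter (fun r => inDeg F r = 0), {v : V | Reach G v r}.ncard
      = ∑ r ∈ Finset.univ.filter (fun r => inDeg F r = 0),
          (Finset.univ.filter fun v => Reach G v r).card := by
        refine Finset.sum_congr rfl fun r _ => ?_
        rw [hset r, Set.ncard_coe_finset]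
    _ = ((Finset.univ.filter (fun r => inDeg F r = 0)).biUnion
          (fun r => Finset.univ.filter fun v => Reach G v r)).card := by
        refine (Finset.card_biUnion ?_).symm
        intro r hr r' hr' hne
        rw [Function.onFun, Finset.disjoint_left]
        intro a ha hb
        have d := part1 r r' (Finset.mem_filter.mp hr).2 (Finset.mem_filter.mp hr').2 hne
        exact Set.disjoint_left.mp d (Finset.mem_filter.mp ha).2 (Finset.mem_filter.mp hb).2
    _ ≤ Fintype.card V := le_trans (Finset.card_le_univ _) (le_of_eq Finset.card_univ)
end
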